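/- Let p be an odd prime and let n divide p^{km} + 1 for positive integers k, m with (p^{km}+1)/n an odd integer. Let F_q be the field with q = p^k elements, σ the coefficientwise Frobenius α ↦ α^p on F_q[X], and η ∈ F_q with F_p(η) = F_q. Let g ∈ F_p[X] be a monic divisor of X^n + 1 with g(−X) = g(X) such that every monic irreducible factor of X^n + 1 over F_p whose degree is not divisible by k divides g. Let h ∈ F_q[X] be a monic divisor of (X^n+1)/g with h(−X) = h(X) such that (X^n+1)/g = ∏_{i=0}^{k−1} σ^i(h) in F_q[X]. Fix a nonzero α ∈ F_p and let a ∈ F_q[X] be the unique polynomial of degree < n with a ≡ 1 (mod g) and a ≡ (αη)^{p^i} (mod σ^i(h)) for all 0 ≤ i < k. Then all coefficients of a lie in F_p, and the subspace S = {(u·g, u·a·g) : u ∈ R} of R × R ≅ F_p^n × F_p^n, where R = F_p[X]/(X^n+1), is totally isotropic with respect to the symplectic inner product. -/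

import Mathlib

open Polynomial

/-- The symplectic inner product on `F_p^n × F_p^n`. -/
def sympForm (p n : ℕ) (u v : (Fin n → ZMod p) × (Fin n → ZMod p)) : ZMod p :=
  (∑ j, u.1 j * v.2 j) - (∑ j, u.2 j * v.1 j)

/-- The cyclotomic ring `R = F_p[X]/(X^n + 1)`. -/
abbrev Rpn (p n : ℕ) := Polynomial (ZMod p) ⧸ Ideal.span {(X : Polynomial (ZMod p)) ^ n + 1}

/-- The quotient map `F_p[X] → R`. -/
noncomputable def mkR (p n : ℕ) : Polynomial (ZMod p) →+* Rpn p n :=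
  Ideal.Quotient.mk (Ideal.span {(X : Polynomial (ZMod p)) ^ n + 1})

/-- The polynomial `a_0 + a_1 X + ⋯ + a_{n−1} X^{n−1}` attached to a vector. -/
noncomputable def toPoly (p n : ℕ) (a : Fin n → ZMod p) : Polynomial (ZMod p) :=
  ∑ j : Fin n, C (a j) * X ^ (j : ℕ)

/-- The identification `F_p^n → R`, `a ↦ a(x)`. -/
noncomputable def toR (p n : ℕ) (a : Fin n → ZMod p) : Rpn p n := mkR p n (toPoly p n a)

/-- The uniquely negacyclic subspace `{(u·g, u·a·g) : u ∈ R}` of `F_p^n × F_p^n`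
(identified inside the vector space via `toR`). -/
noncomputable def Scode (p n : ℕ) (g a : Polynomial (ZMod p)) :
    Set ((Fin n → ZMod p) × (Fin n → ZMod p)) :=
  {ab | ∃ u : Rpn p n, toR p n ab.1 = u * mkR p n g ∧
    toR p n ab.2 = u * mkR p n a * mkR p n g}


section Aux
variable {p : ℕ} [Fact p.Prime]

lemma iter_map_coeff {K : Type*} [Field K] [CharP K p] (j : ℕ) (f : K[X]) (i : ℕ) :
    ((Polynomial.map (frobenius K p))^[j] f).coeff i = (f.coeff i) ^ p ^ j := by
  induction j with
  | zero => simp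
  | succ j ih =>
    rw [Function.iterate_succ_apply', coeff_map, ih, frobenius_def, ← pow_mul, ← pow_succ]

lemma galois_pow_card {k : ℕ} (hk : k ≠ 0) (x : GaloisField p k) : x ^ p ^ k = x := by
  haveI : Fintype (GaloisField p k) := Fintype.ofFinite _
  have hc : Fintype.card (GaloisField p k) = p ^ k := by
    rw [← Nat.card_eq_fintype_card, GaloisField.card p k hk]
  rw [← hc, FiniteField.pow_card]

lemma sigma_iter_fixed {k : ℕ} (hk : k ≠ 0) (f : Polynomial (GaloisField p k)) :
    (Polynomial.map (frobenius (GaloisField p k) p))^[k] f = f := by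
  ext i
  rw [iter_map_coeff, galois_pow_card hk]

lemma sigma_fix_base {k : ℕ} (f : Polynomial (ZMod p)) :
    Polynomial.map (frobenius (GaloisField p k) p)
      (f.map (algebraMap (ZMod p) (GaloisField p k))) =
    f.map (algebraMap (ZMod p) (GaloisField p k)) := by
  rw [Polynomial.map_map]
  congr 1
  ext x
  simp [frobenius_def, ← map_pow, ZMod.pow_card]

lemma frob_eval_step {K L : Type*} [Field K] [Field L] [CharP K p] (ψ : K →+* L)
    (F : K[X]) (z : L) :
    ((Polynomial.map (frobenius K p) F).map ψ).eval (z ^ p) = ((F.map ψ).eval z) ^ p := by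
  haveI : CharP L p := charP_of_injective_ringHom ψ.injective p
  have h1 : ((F.map ψ).eval z) ^ p = frobenius L p ((F.map ψ).eval z) := rfl
  rw [h1, eval_map, eval_map, hom_eval₂, eval₂_map]
  have h2 : (frobenius L p).comp ψ = ψ.comp (frobenius K p) := by
    ext x; simp [frobenius_def, map_pow]
  rw [h2, frobenius_def]

lemma frob_eval_iter {K L : Type*} [Field K] [Field L] [CharP K p] (ψ : K →+* L)
    (F : K[X]) (z : L) (j : ℕ) :
    (((Polynomial.map (frobenius K p))^[j] F).map ψ).eval (z ^ p ^ j)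
      = ((F.map ψ).eval z) ^ p ^ j := by
  induction j with
  | zero => simp
  | succ j ih =>
    rw [Function.iterate_succ_apply', pow_succ, pow_mul, frob_eval_step, ih, ← pow_mul, ← pow_succ]

end Aux

lemma sep_Xn_add_one {L : Type*} [Field L] {n : ℕ} (hnL : (n : L) ≠ 0) :
    ((X : L[X]) ^ n + 1).Separable := by
  have := Polynomial.separable_X_pow_sub_C (-1 : L) hnL (by norm_num)
  simpa [sub_neg_eq_add] using this

lemma iter_comp_neg {p : ℕ} [Fact p.Prime] {K : Type*} [Field K] [CharP K p]
    (h : K[X]) (hh : h.comp (-X) = h) (i : ℕ) :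
    ((Polynomial.map (frobenius K p))^[i] h).comp (-X)
      = (Polynomial.map (frobenius K p))^[i] h := by
  induction i with
  | zero => simpa
  | succ i ih =>
    have hx : Polynomial.map (frobenius K p) (-X : K[X]) = -X := by simp
    rw [Function.iterate_succ_apply', ← hx, ← Polynomial.map_comp, ih]

section Quot
variable (p n : ℕ) [Fact p.Prime]

lemma monicM (hn : 0 < n) : ((X : Polynomial (ZMod p)) ^ n + 1).Monic := by
  have := monic_X_pow_add_C (a := (1 : ZMod p)) hn.ne'
  simpa using this

noncomputable def TL (hn : 0 < n) : Rpn p n →ₗ[ZMod p] ZMod p :=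
  (Polynomial.lcoeff (ZMod p) 0).comp (AdjoinRoot.modByMonicHom (monicM p n hn))

lemma TL_mk (hn : 0 < n) (f : Polynomial (ZMod p)) :
    TL p n hn (mkR p n f) = (f %ₘ ((X : Polynomial (ZMod p)) ^ n + 1)).coeff 0 := by
  show (Polynomial.lcoeff (ZMod p) 0) (AdjoinRoot.modByMonicHom (monicM p n hn)
    (AdjoinRoot.mk _ f)) = _
  rw [AdjoinRoot.modByMonicHom_mk]
  rfl

lemma TL_mk_C_mul (hn : 0 < n) (r : ZMod p) (f : Polynomial (ZMod p)) :
    TL p n hn (mkR p n (C r * f)) = r * TL p n hn (mkR p n f) := by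
  rw [TL_mk, TL_mk, ← smul_eq_C_mul, smul_modByMonic, coeff_smul, smul_eq_mul]

lemma mk_X_n : mkR p n ((X : Polynomial (ZMod p)) ^ n) = -1 := by
  have h0 : mkR p n ((X : Polynomial (ZMod p)) ^ n + 1) = 0 :=
    Ideal.Quotient.eq_zero_iff_mem.2 (Ideal.subset_span (Set.mem_singleton _))
  have := map_add (mkR p n) ((X : Polynomial (ZMod p)) ^ n) 1
  rw [h0, map_one] at this
  exact eq_neg_of_add_eq_zero_left this.symm




lemma mk_X_qn (q e : ℕ) : mkR p n ((X : Polynomial (ZMod p)) ^ (q * n + e))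
    = mkR p n (C ((-1 : ZMod p) ^ q) * X ^ e) := by
  rw [pow_add, pow_mul', map_mul, map_pow, mk_X_n]
  simp [map_pow]

lemma TL_X (hn : 0 < n) (e : ℕ) (he : e < n) :
    TL p n hn (mkR p n ((X : Polynomial (ZMod p)) ^ e)) = if e = 0 then 1 else 0 := by
  rw [TL_mk]
  have hd : degree ((X : Polynomial (ZMod p)) ^ e) < degree ((X : Polynomial (ZMod p)) ^ n + 1) := by
    rw [degree_X_pow]
    have : degree ((X : Polynomial (ZMod p)) ^ n + 1) = n := by
      have := degree_X_pow_add_C (R := ZMod p) hn (1 : ZMod p)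
      simpa using this
    rw [this]
    exact_mod_cast he
  rw [(modByMonic_eq_self_iff (monicM p n hn)).2 hd, coeff_X_pow]
  simp [eq_comm]

lemma TL_pow (hn : 0 < n) (j l : ℕ) (hj : j < n) (hl : l < n) :
    TL p n hn (mkR p n ((X : Polynomial (ZMod p)) ^ j * (-(X : Polynomial (ZMod p)) ^ (n - 1)) ^ l))
      = if j = l then 1 else 0 := by
  have hpoly : (X : Polynomial (ZMod p)) ^ j * (-(X : Polynomial (ZMod p)) ^ (n - 1)) ^ l
      = C ((-1 : ZMod p) ^ l) * X ^ (j + l * (n - 1)) := by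
    rw [neg_pow, map_pow, map_neg, map_one, pow_add, ← pow_mul]
    ring
  rw [hpoly]
  have hln : l * (n - 1) + l = l * n := by
    have : n - 1 + 1 = n := Nat.succ_pred_eq_of_pos hn
    calc l * (n - 1) + l = l * (n - 1 + 1) := by ring
    _ = l * n := by rw [this]
  rcases le_or_gt l j with hle | hlt
  · have he : j + l * (n - 1) = l * n + (j - l) := by omega
    rw [he, TL_mk_C_mul, mk_X_qn, TL_mk_C_mul, TL_X p n hn _ (by omega)]
    rcases eq_or_ne j l with rfl | hne
    · simp [← mul_pow]
    · have hjl : j - l ≠ 0 := by omega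
      simp [hne, hjl]
  · obtain ⟨l', rfl⟩ : ∃ l', l = l' + 1 := ⟨l - 1, by omega⟩
    have e1 : l' * (n - 1) + l' = l' * n := by
      have hsub : n - 1 + 1 = n := Nat.succ_pred_eq_of_pos hn
      calc l' * (n - 1) + l' = l' * (n - 1 + 1) := by ring
      _ = l' * n := by rw [hsub]
    have e2 : (l' + 1) * (n - 1) = l' * (n - 1) + (n - 1) := by ring
    have he : j + (l' + 1) * (n - 1) = l' * n + (n + j - (l' + 1)) := by omega
    rw [he, TL_mk_C_mul, mk_X_qn, TL_mk_C_mul, TL_X p n hn _ (by omega)]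
    have hnz : ¬ (n + j - (l' + 1) = 0) := by omega
    simp [hnz, Nat.ne_of_lt hlt]


lemma mk_neg_pow_n (hn : 0 < n) :
    mkR p n ((-(X : Polynomial (ZMod p)) ^ (n - 1)) ^ n) = -1 := by
  have hpoly : (-(X : Polynomial (ZMod p)) ^ (n - 1)) ^ n
      = C ((-1 : ZMod p) ^ n) * X ^ ((n - 1) * n + 0) := by
    rw [neg_pow, ← pow_mul, Nat.add_zero, map_pow, map_neg, map_one]
  rw [hpoly, map_mul, mk_X_qn p n (n - 1) 0, ← map_mul, ← mul_assoc, ← C_mul, ← pow_add]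
  have hodd : Odd (n + (n - 1)) := ⟨n - 1, by omega⟩
  rw [hodd.neg_one_pow]
  simp

noncomputable def betaR (hn : 0 < n) : Rpn p n →+* Rpn p n :=
  Ideal.Quotient.lift _
    (eval₂RingHom ((mkR p n).comp C) (mkR p n (-(X : Polynomial (ZMod p)) ^ (n - 1))))
    (by
      intro f hf
      rw [Ideal.mem_span_singleton] at hf
      obtain ⟨c, rfl⟩ := hf
      rw [map_mul]
      have hzero : (eval₂RingHom ((mkR p n).comp C)
          (mkR p n (-(X : Polynomial (ZMod p)) ^ (n - 1))))
          ((X : Polynomial (ZMod p)) ^ n + 1) = 0 := by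
        simp only [coe_eval₂RingHom, eval₂_add, eval₂_pow, eval₂_X, eval₂_one]
        rw [← map_pow, mk_neg_pow_n p n hn]
        ring
      rw [hzero, zero_mul])

lemma betaR_mk (hn : 0 < n) (f : Polynomial (ZMod p)) :
    betaR p n hn (mkR p n f) = mkR p n (f.comp (-(X : Polynomial (ZMod p)) ^ (n - 1))) := by
  show (Ideal.Quotient.lift _ _ _) (Ideal.Quotient.mk _ f) = _
  rw [Ideal.Quotient.lift_mk]
  show eval₂ ((mkR p n).comp C) (mkR p n (-(X : Polynomial (ZMod p)) ^ (n - 1))) f = _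
  rw [Polynomial.comp, ← hom_eval₂]


lemma pairing (hn : 0 < n) (b c : Fin n → ZMod p) :
    ∑ j, b j * c j = TL p n hn (toR p n b * betaR p n hn (toR p n c)) := by
  have expand : toR p n b * betaR p n hn (toR p n c)
      = ∑ j : Fin n, ∑ l : Fin n, mkR p n (C (b j * c l) *
          ((X : Polynomial (ZMod p)) ^ (j : ℕ) * (-(X : Polynomial (ZMod p)) ^ (n - 1)) ^ (l : ℕ))) := by
    rw [toR, toR, betaR_mk, ← map_mul]
    have hcomp : (toPoly p n c).comp (-(X : Polynomial (ZMod p)) ^ (n - 1))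
        = ∑ l : Fin n, C (c l) * (-(X : Polynomial (ZMod p)) ^ (n - 1)) ^ (l : ℕ) := by
      rw [toPoly, Polynomial.comp, eval₂_finset_sum]
      refine Finset.sum_congr rfl fun l _ => ?_
      rw [eval₂_mul, eval₂_C, eval₂_X_pow]
    rw [hcomp, toPoly, Finset.sum_mul_sum]
    rw [map_sum]
    refine Finset.sum_congr rfl fun j _ => ?_
    rw [map_sum]
    refine Finset.sum_congr rfl fun l _ => ?_
    congr 1
    rw [C_mul]
    ring
  rw [expand]
  simp only [map_sum]
  have step : ∀ j : Fin n, ∑ l : Fin n, TL p n hn (mkR p n (C (b j * c l) *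
      ((X : Polynomial (ZMod p)) ^ (j : ℕ) * (-(X : Polynomial (ZMod p)) ^ (n - 1)) ^ (l : ℕ))))
      = b j * c j := by
    intro j
    have : ∀ l : Fin n, TL p n hn (mkR p n (C (b j * c l) *
        ((X : Polynomial (ZMod p)) ^ (j : ℕ) * (-(X : Polynomial (ZMod p)) ^ (n - 1)) ^ (l : ℕ))))
        = b j * c l * (if (j : ℕ) = (l : ℕ) then 1 else 0) := by
      intro l
      rw [TL_mk_C_mul, TL_pow p n hn _ _ j.isLt l.isLt]
    simp only [this, Fin.val_eq_val]
    simp [Finset.sum_ite_eq]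
  simp only [step]

end Quot

/-- construction of `km`-Frobenius negacyclic codes: with `g`, `h`, `α`,
`a` as described, all coefficients of `a` lie in `F_p` (i.e. `a` is the image of some
`a' ∈ F_p[X]`), and the subspace `S = {(u·g, u·a·g) : u ∈ R}` is totally isotropic. -/
theorem stmt13 (p n k m : ℕ) [Fact p.Prime] (hp : Odd p) (hk : 0 < k) (hm : 0 < m)
    (hn : 0 < n) (hdvd : n ∣ p ^ (k * m) + 1) (hq : Odd ((p ^ (k * m) + 1) / n))
    (η : GaloisField p k) (hη : Algebra.adjoin (ZMod p) {η} = ⊤)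
    (g : Polynomial (ZMod p)) (hgm : g.Monic) (hgdvd : g ∣ X ^ n + 1)
    (hgneg : g.comp (-X) = g)
    (hgfac : ∀ r : Polynomial (ZMod p), r.Monic → Irreducible r → r ∣ X ^ n + 1 →
      ¬ k ∣ r.natDegree → r ∣ g)
    (h : Polynomial (GaloisField p k)) (hhm : h.Monic)
    (hhdvd : h ∣ (X ^ n + 1) / g.map (algebraMap (ZMod p) (GaloisField p k)))
    (hhneg : h.comp (-X) = h)
    (hprod : (X ^ n + 1) / g.map (algebraMap (ZMod p) (GaloisField p k)) =
      ∏ i ∈ Finset.range k, (Polynomial.map (frobenius (GaloisField p k) p))^[i] h)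
    (α : ZMod p) (hα : α ≠ 0)
    (a : Polynomial (GaloisField p k)) (hadeg : a.degree < n)
    (hag : g.map (algebraMap (ZMod p) (GaloisField p k)) ∣ a - 1)
    (hah : ∀ i < k, (Polynomial.map (frobenius (GaloisField p k) p))^[i] h ∣
      a - C ((algebraMap (ZMod p) (GaloisField p k) α * η) ^ p ^ i)) :
    ∃ a' : Polynomial (ZMod p),
      a'.map (algebraMap (ZMod p) (GaloisField p k)) = a ∧
      ∀ u ∈ Scode p n g a', ∀ v ∈ Scode p n g a', sympForm p n u v = 0 := by
  classical
  have hprime : p.Prime := Fact.out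
  have hk0 : k ≠ 0 := hk.ne'
  have hkm0 : k * m ≠ 0 := Nat.mul_ne_zero hk.ne' hm.ne'
  have hpn : ¬ p ∣ n := by
    intro hpd
    have h1 : p ∣ p ^ (k * m) := dvd_pow_self p hkm0
    have h2 : p ∣ p ^ (k * m) + 1 := hpd.trans hdvd
    have h3 : p ∣ 1 := (Nat.dvd_add_right h1).mp h2
    have h4 := Nat.le_of_dvd one_pos h3
    have h5 := hprime.two_le
    omega
  set ι := algebraMap (ZMod p) (GaloisField p k) with hιdef
  set gq := g.map ι with hgqdef
  have hnK : ((n : GaloisField p k)) ≠ 0 := by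
    rw [Ne, CharP.cast_eq_zero_iff (GaloisField p k) p]
    exact hpn
  have hMsep : ((X : (GaloisField p k)[X]) ^ n + 1).Separable := sep_Xn_add_one hnK
  have hMsq : Squarefree ((X : (GaloisField p k)[X]) ^ n + 1) := hMsep.squarefree
  have hgq_dvd : gq ∣ (X : (GaloisField p k)[X]) ^ n + 1 := by
    have h1 := Polynomial.map_dvd ι hgdvd
    simpa using h1
  have hgq0 : gq ≠ 0 := (hgm.map ι).ne_zero
  have hfac : (X : (GaloisField p k)[X]) ^ n + 1
      = gq * ∏ i ∈ Finset.range k, (Polynomial.map (frobenius (GaloisField p k) p))^[i] h := by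
    rw [← hprod]
    exact (EuclideanDomain.mul_div_cancel' hgq0 hgq_dvd).symm
  -- Part 1 : σ a = a
  have hshift : ∀ j, j < k →
      (Polynomial.map (frobenius (GaloisField p k) p))^[j+1] h ∣
        Polynomial.map (frobenius (GaloisField p k) p) a - C ((ι α * η) ^ p ^ (j+1)) := by
    intro j hj
    have hd := Polynomial.map_dvd (frobenius (GaloisField p k) p) (hah j hj)
    rw [Polynomial.map_sub, Polynomial.map_C] at hd
    have hwj : (frobenius (GaloisField p k) p) ((ι α * η) ^ p ^ j) = (ι α * η) ^ p ^ (j+1) := by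
      rw [frobenius_def, ← pow_mul, ← pow_succ]
    rw [hwj] at hd
    rw [Function.iterate_succ_apply']
    exact hd
  have hdvd_d : ∀ i < k, (Polynomial.map (frobenius (GaloisField p k) p))^[i] h ∣
      Polynomial.map (frobenius (GaloisField p k) p) a - a := by
    intro i hi
    rcases Nat.eq_zero_or_pos i with rfl | hipos
    · have h1 := hshift (k-1) (by omega)
      rw [(by omega : k - 1 + 1 = k), sigma_iter_fixed hk0] at h1
      have hwk : (ι α * η) ^ p ^ k = (ι α * η) ^ p ^ 0 := by
        rw [galois_pow_card hk0, pow_zero, pow_one]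
      rw [hwk] at h1
      have h2 := hah 0 hk
      have h3 := dvd_sub h1 h2
      rw [Function.iterate_zero_apply] at h2 ⊢
      simpa using dvd_sub h1 h2
    · obtain ⟨j, rfl⟩ := Nat.exists_eq_succ_of_ne_zero hipos.ne'
      have h1 := hshift j (by omega)
      have h2 := hah (j+1) hi
      simpa using dvd_sub h1 h2
  have hgq_d : gq ∣ Polynomial.map (frobenius (GaloisField p k) p) a - a := by
    have hd := Polynomial.map_dvd (frobenius (GaloisField p k) p) hag
    rw [Polynomial.map_sub, Polynomial.map_one] at hd
    have hfix : Polynomial.map (frobenius (GaloisField p k) p) gq = gq := sigma_fix_base g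
    rw [hfix] at hd
    simpa using dvd_sub hd hag
  set f : ℕ → (GaloisField p k)[X] :=
    fun i => if i = k then gq else (Polynomial.map (frobenius (GaloisField p k) p))^[i] h
    with hfdef
  have hprodf : ∏ i ∈ Finset.range (k+1), f i = (X : (GaloisField p k)[X]) ^ n + 1 := by
    rw [Finset.prod_range_succ]
    have hcongr : ∀ i ∈ Finset.range k,
        f i = (Polynomial.map (frobenius (GaloisField p k) p))^[i] h := by
      intro i hi
      rw [hfdef]
      have : i ≠ k := by simp only [Finset.mem_range] at hi; omega
      simp [this]
    rw [Finset.prod_congr rfl hcongr]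
    have hk' : f k = gq := by rw [hfdef]; simp
    rw [hk', hfac]
    ring
  have hpair : (↑(Finset.range (k+1)) : Set ℕ).Pairwise (Function.onFun IsCoprime f) := by
    intro i hi j hj hij
    have hdd : f i * f j ∣ (X : (GaloisField p k)[X]) ^ n + 1 := by
      rw [← hprodf, ← Finset.prod_pair hij]
      refine Finset.prod_dvd_prod_of_subset _ _ f ?_
      intro x hx
      simp only [Finset.mem_insert, Finset.mem_singleton] at hx
      rcases hx with rfl | rfl
      · exact hi
      · exact hj
    have hgcd : IsUnit (EuclideanDomain.gcd (f i) (f j)) := by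
      apply hMsq
      exact dvd_trans (mul_dvd_mul (EuclideanDomain.gcd_dvd_left _ _)
        (EuclideanDomain.gcd_dvd_right _ _)) hdd
    exact EuclideanDomain.gcd_isUnit_iff.mp hgcd
  have hMd : (X : (GaloisField p k)[X]) ^ n + 1 ∣
      Polynomial.map (frobenius (GaloisField p k) p) a - a := by
    rw [← hprodf]
    refine Finset.prod_dvd_of_coprime hpair ?_
    intro i hi
    by_cases hik : i = k
    · have : f i = gq := by rw [hfdef]; simp [hik]
      rw [this]; exact hgq_d
    · have : f i = (Polynomial.map (frobenius (GaloisField p k) p))^[i] h := by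
        rw [hfdef]; simp [hik]
      rw [this]
      exact hdvd_d i (by simp only [Finset.mem_range] at hi; omega)
  have hσa : Polynomial.map (frobenius (GaloisField p k) p) a = a := by
    have hdm : ((X : (GaloisField p k)[X]) ^ n + 1).degree = (n : ℕ) := by
      have := degree_X_pow_add_C (R := GaloisField p k) hn (1 : GaloisField p k)
      simpa using this
    have hdeg_d : (Polynomial.map (frobenius (GaloisField p k) p) a - a).degree
        < ((X : (GaloisField p k)[X]) ^ n + 1).degree := by
      rw [hdm]
      refine lt_of_le_of_lt (degree_sub_le _ _) ?_
      rw [max_lt_iff]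
      constructor
      · rw [Polynomial.degree_map]; exact hadeg
      · exact hadeg
    have := Polynomial.eq_zero_of_dvd_of_degree_lt hMd hdeg_d
    exact sub_eq_zero.mp this
  have hcoeff : ∀ i : ℕ, a.coeff i ∈ Set.range ι := by
    intro i
    have hfixc : (a.coeff i) ^ p = a.coeff i := by
      have := congrArg (fun q => Polynomial.coeff q i) hσa
      simpa [Polynomial.coeff_map, frobenius_def] using this
    by_contra hc
    have hone_lt : 1 < p := hprime.one_lt
    have hPc0 : ((X : (GaloisField p k)[X]) ^ p - X) ≠ 0 :=
      FiniteField.X_pow_card_sub_X_ne_zero _ hone_lt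
    have hroots : ∀ x : ZMod p, ι x ∈ ((X : (GaloisField p k)[X]) ^ p - X).roots := by
      intro x
      rw [Polynomial.mem_roots hPc0]
      simp [Polynomial.IsRoot, ← map_pow, ZMod.pow_card]
    have hcroot : a.coeff i ∈ ((X : (GaloisField p k)[X]) ^ p - X).roots := by
      rw [Polynomial.mem_roots hPc0]
      simp [Polynomial.IsRoot, hfixc]
    set s : Finset (GaloisField p k) := Finset.univ.image (fun x : ZMod p => ι x) with hsdef
    have hsub : insert (a.coeff i) s ⊆ ((X : (GaloisField p k)[X]) ^ p - X).roots.toFinset := by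
      intro x hx
      rw [Finset.mem_insert] at hx
      rw [Multiset.mem_toFinset]
      rcases hx with rfl | hx
      · exact hcroot
      · obtain ⟨y, _, rfl⟩ := Finset.mem_image.mp hx
        exact hroots y
    have hnotmem : a.coeff i ∉ s := by
      intro hmem
      obtain ⟨y, _, hy⟩ := Finset.mem_image.mp hmem
      exact hc ⟨y, hy⟩
    have hcard1 : (insert (a.coeff i) s).card = p + 1 := by
      rw [Finset.card_insert_of_notMem hnotmem, hsdef,
        Finset.card_image_of_injective _ (RingHom.injective ι), Finset.card_univ, ZMod.card]
    have hcard2 : ((X : (GaloisField p k)[X]) ^ p - X).roots.toFinset.card ≤ p := by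
      calc ((X : (GaloisField p k)[X]) ^ p - X).roots.toFinset.card
          ≤ Multiset.card ((X : (GaloisField p k)[X]) ^ p - X).roots :=
            Multiset.toFinset_card_le _
        _ ≤ ((X : (GaloisField p k)[X]) ^ p - X).natDegree := Polynomial.card_roots' _
        _ = p := FiniteField.X_pow_card_sub_X_natDegree_eq _ hone_lt
    have := Finset.card_le_card hsub
    omega
  obtain ⟨a', ha'⟩ := (Polynomial.mem_lifts a).mp ((Polynomial.lifts_iff_coeff_lifts a).mpr hcoeff)
  refine ⟨a', ha', ?_⟩
  -- Part 2 : isotropy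
  have hdega' : a'.degree < n := by
    rw [← Polynomial.degree_map a' ι, ha']
    exact hadeg
  have hKD : ((X : (ZMod p)[X]) ^ n + 1) ∣
      g * g.comp (-(X : (ZMod p)[X]) ^ (n-1)) *
        (a'.comp (-(X : (ZMod p)[X]) ^ (n-1)) - a') := by
    set L := Polynomial.SplittingField ((X : (GaloisField p k)[X]) ^ n + 1) with hLdef
    set ψ := algebraMap (GaloisField p k) L with hψdef
    set ρ := ψ.comp ι with hρdef
    haveI hcharL : CharP L p := charP_of_injective_ringHom (RingHom.injective ρ) p
    rw [← Polynomial.map_dvd_map' ρ]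
    have hmapM : (((X : (ZMod p)[X]) ^ n + 1)).map ρ = (X : L[X]) ^ n + 1 := by simp
    rw [hmapM]
    have hML : (X : L[X]) ^ n + 1 = ((X : (GaloisField p k)[X]) ^ n + 1).map ψ := by simp
    have hsplits : ((X : L[X]) ^ n + 1).Splits := by
      rw [hML]
      exact (Polynomial.SplittingField.splits ((X : (GaloisField p k)[X]) ^ n + 1))
    have hnL : ((n : L)) ≠ 0 := by
      rw [Ne, CharP.cast_eq_zero_iff L p]
      exact hpn
    have hsepL : ((X : L[X]) ^ n + 1).Separable := sep_Xn_add_one hnL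
    have hnodup := Polynomial.nodup_roots hsepL
    have hmonicL : ((X : L[X]) ^ n + 1).Monic := by
      have := monic_X_pow_add_C (a := (1 : L)) hn.ne'
      simpa using this
    have hprodroots : (X : L[X]) ^ n + 1
        = ∏ ζ ∈ ((X : L[X]) ^ n + 1).roots.toFinset, (X - C ζ) := by
      conv_lhs => rw [hsplits.eq_prod_roots_of_monic hmonicL]
      rw [Finset.prod_eq_multiset_prod, Multiset.toFinset_val,
        Multiset.dedup_eq_self.mpr hnodup]
    rw [hprodroots]
    refine Finset.prod_dvd_of_coprime ?_ ?_
    · intro x hx y hy hxy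
      exact Polynomial.isCoprime_X_sub_C_of_isUnit_sub (sub_ne_zero_of_ne hxy).isUnit
    · intro ζ hζmem
      rw [Polynomial.dvd_iff_isRoot]
      have hζ : ζ ∈ ((X : L[X]) ^ n + 1).roots := Multiset.mem_toFinset.mp hζmem
      have hζroot : ζ ^ n = -1 := by
        have h1 := Polynomial.isRoot_of_mem_roots hζ
        simp only [Polynomial.IsRoot, Polynomial.eval_add, Polynomial.eval_pow,
          Polynomial.eval_X, Polynomial.eval_one] at h1
        exact eq_neg_of_add_eq_zero_left h1
      have hζ0 : ζ ≠ 0 := by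
        intro h0
        rw [h0, zero_pow hn.ne'] at hζroot
        exact one_ne_zero (neg_eq_zero.mp hζroot.symm)
      have hξζ : (-ζ ^ (n-1)) * ζ = 1 := by
        rw [neg_mul, ← pow_succ, (by omega : n - 1 + 1 = n), hζroot, neg_neg]
      have hevalD : Polynomial.eval ζ
          ((g * g.comp (-(X : (ZMod p)[X]) ^ (n-1)) *
            (a'.comp (-(X : (ZMod p)[X]) ^ (n-1)) - a')).map ρ) =
          Polynomial.eval ζ (g.map ρ) * Polynomial.eval (-ζ ^ (n-1)) (g.map ρ) *
            (Polynomial.eval (-ζ ^ (n-1)) (a'.map ρ) - Polynomial.eval ζ (a'.map ρ)) := by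
        simp only [Polynomial.map_mul, Polynomial.map_sub, Polynomial.eval_mul,
          Polynomial.eval_sub, Polynomial.map_comp, Polynomial.eval_comp]
        have hPev : Polynomial.eval ζ ((-(X : (ZMod p)[X]) ^ (n-1)).map ρ) = -ζ ^ (n-1) := by
          simp
        rw [hPev]
      show Polynomial.eval ζ _ = 0
      rw [hevalD]
      by_cases hgζ : Polynomial.eval ζ (g.map ρ) = 0
      · rw [hgζ, zero_mul, zero_mul]
      · have hMζ : Polynomial.eval ζ (((X : (GaloisField p k)[X]) ^ n + 1).map ψ) = 0 := by
          rw [← hML]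
          exact Polynomial.isRoot_of_mem_roots hζ
        have hfacL : ((X : (GaloisField p k)[X]) ^ n + 1).map ψ
            = gq.map ψ * ∏ i ∈ Finset.range k,
              ((Polynomial.map (frobenius (GaloisField p k) p))^[i] h).map ψ := by
          have hfacL0 := congrArg (Polynomial.map ψ) hfac
          rw [Polynomial.map_mul, Polynomial.map_prod] at hfacL0
          exact hfacL0
        have hgqψ : gq.map ψ = g.map ρ := by
          rw [hgqdef, Polynomial.map_map, hρdef]
        have hprod0 : (∏ i ∈ Finset.range k, Polynomial.eval ζ
            (((Polynomial.map (frobenius (GaloisField p k) p))^[i] h).map ψ)) = 0 := by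
          have h1 := hMζ
          rw [hfacL, Polynomial.eval_mul, hgqψ, Polynomial.eval_prod] at h1
          rcases mul_eq_zero.mp h1 with h2 | h2
          · exact absurd h2 hgζ
          · exact h2
        obtain ⟨i, hik, hhiζ⟩ := Finset.prod_eq_zero_iff.mp hprod0
        have hik' : i < k := Finset.mem_range.mp hik
        have hw_eval : ∀ z : L, Polynomial.eval z
            (((Polynomial.map (frobenius (GaloisField p k) p))^[i] h).map ψ) = 0 →
            Polynomial.eval z (a'.map ρ) = ψ ((ι α * η) ^ p ^ i) := by
          intro z hz
          obtain ⟨cpol, hcpol⟩ := hah i hik'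
          have e := congrArg (fun q => Polynomial.eval z (Polynomial.map ψ q)) hcpol
          simp only [Polynomial.map_sub, Polynomial.map_mul, Polynomial.map_C,
            Polynomial.eval_sub, Polynomial.eval_mul, Polynomial.eval_C] at e
          rw [hz, zero_mul] at e
          have hmapa : a.map ψ = a'.map ρ := by
            rw [← ha', Polynomial.map_map, hρdef]
          rw [hmapa] at e
          exact sub_eq_zero.mp e
        have h1 : Polynomial.eval ζ (a'.map ρ) = ψ ((ι α * η) ^ p ^ i) := hw_eval ζ hhiζ
        have hξroot : Polynomial.eval (-ζ ^ (n-1))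
            (((Polynomial.map (frobenius (GaloisField p k) p))^[i] h).map ψ) = 0 := by
          have hnt : n * ((p ^ (k*m) + 1) / n) = p ^ (k*m) + 1 := Nat.mul_div_cancel' hdvd
          have hζpk : ζ ^ (p ^ (k*m)) * ζ = -1 := by
            rw [← pow_succ, ← hnt, pow_mul, hζroot, hq.neg_one_pow]
          have hζpk' : ζ ^ (p ^ (k*m)) = -(-ζ ^ (n-1)) := by
            refine mul_right_cancel₀ hζ0 ?_
            rw [hζpk, neg_mul, hξζ]
          have hcompneg : ((((Polynomial.map (frobenius (GaloisField p k) p))^[i] h).map ψ)).comp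
              (-X) = (((Polynomial.map (frobenius (GaloisField p k) p))^[i] h).map ψ) := by
            have hKlevel := iter_comp_neg (p := p) h hhneg i
            have hx : Polynomial.map ψ (-X : (GaloisField p k)[X]) = -X := by simp
            rw [← hx, ← Polynomial.map_comp, hKlevel]
          have hev : Polynomial.eval (-ζ ^ (n-1))
              (((Polynomial.map (frobenius (GaloisField p k) p))^[i] h).map ψ)
              = Polynomial.eval (ζ ^ (p ^ (k*m)))
                (((Polynomial.map (frobenius (GaloisField p k) p))^[i] h).map ψ) := by
            conv_rhs => rw [← hcompneg]
            rw [Polynomial.eval_comp]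
            simp only [Polynomial.eval_neg, Polynomial.eval_X]
            rw [hζpk', neg_neg]
          rw [hev]
          have hiterfix : (Polynomial.map (frobenius (GaloisField p k) p))^[k*m]
              ((Polynomial.map (frobenius (GaloisField p k) p))^[i] h)
              = (Polynomial.map (frobenius (GaloisField p k) p))^[i] h := by
            rw [← Function.iterate_add_apply, add_comm, Function.iterate_add_apply]
            have hkmfix : (Polynomial.map (frobenius (GaloisField p k) p))^[k*m] h = h := by
              rw [Function.iterate_mul]
              exact Function.iterate_fixed (sigma_iter_fixed hk0 h) m
            rw [hkmfix]
          have hfe := frob_eval_iter (p := p) ψ ((Polynomial.map (frobenius (GaloisField p k) p))^[i] h)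
            ζ (k*m)
          rw [hiterfix] at hfe
          rw [hfe, hhiζ]
          exact zero_pow (pow_ne_zero _ hprime.pos.ne')
        have h2 : Polynomial.eval (-ζ ^ (n-1)) (a'.map ρ) = ψ ((ι α * η) ^ p ^ i) :=
          hw_eval _ hξroot
        rw [h1, h2, sub_self, mul_zero]
  have keyzero : mkR p n g * betaR p n hn (mkR p n g) *
      (betaR p n hn (mkR p n a') - mkR p n a') = 0 := by
    rw [betaR_mk, betaR_mk, ← map_sub, ← map_mul, ← map_mul]
    exact Ideal.Quotient.eq_zero_iff_mem.2 (Ideal.mem_span_singleton.2 hKD)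
  intro u hu v hv
  obtain ⟨U, hb, hc⟩ := hu
  obtain ⟨V, hd, he⟩ := hv
  show (∑ j, u.1 j * v.2 j) - (∑ j, u.2 j * v.1 j) = 0
  rw [pairing p n hn u.1 v.2, pairing p n hn u.2 v.1, hb, he, hc, hd]
  have hswap : (U * mkR p n g) * betaR p n hn (V * mkR p n a' * mkR p n g)
      = (U * mkR p n a' * mkR p n g) * betaR p n hn (V * mkR p n g) := by
    rw [map_mul, map_mul, map_mul]
    linear_combination (U * betaR p n hn V) * keyzero
  rw [hswap, sub_self]
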